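/- Fix K > 0 and α ∈ (1/2, 1). For every t > 0 the function y ↦ q*(t,y) is twice continuously differentiable on (0,∞), with derivatives obtained by differentiation under the integral sign: ∂_y q*(t,y) = (Γ(α)Γ(1−α))^{−1} ∫₀¹ ∂_y q_BS(τ t, y) τ^{α−1}(1−τ)^{−α} dτ and ∂²_y q*(t,y) = (Γ(α)Γ(1−α))^{−1} ∫₀¹ ∂²_y q_BS(τ t, y) τ^{α−1}(1−τ)^{−α} dτ. Moreover 0 ≤ ∂_y q*(t,y) ≤ 1 and 0 ≤ (y²/2) ∂²_y q*(t,y) ≤ ( Γ(α − 1/2)/(2π Γ(α)) ) √( K y / (2t) ) for all t, y > 0. -/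

import Mathlib

open MeasureTheory Set

/-- Standard normal cumulative distribution function. -/
noncomputable def normCdf (z : ℝ) : ℝ :=
  (Real.sqrt (2 * Real.pi))⁻¹ * ∫ u in Set.Iic z, Real.exp (-u ^ 2 / 2)

noncomputable def normPdf (z : ℝ) : ℝ :=
  (Real.sqrt (2 * Real.pi))⁻¹ * Real.exp (-z ^ 2 / 2)

lemma gauss_eq : (fun u : ℝ => Real.exp (-u ^ 2 / 2)) = fun u => Real.exp (-(1/2) * u ^ 2) := by
  funext u; ring_nf

lemma integrable_gauss : Integrable (fun u : ℝ => Real.exp (-u ^ 2 / 2)) := by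
  rw [gauss_eq]
  simpa using integrable_exp_neg_mul_sq (by norm_num : (0:ℝ) < 1/2)

lemma sqrt_two_pi_pos : 0 < Real.sqrt (2 * Real.pi) :=
  Real.sqrt_pos.2 (by positivity)

lemma hasDerivAt_normCdf (z : ℝ) : HasDerivAt normCdf (normPdf z) z := by
  have key : ∀ x : ℝ, normCdf x = (Real.sqrt (2 * Real.pi))⁻¹ *
      ((∫ u in Set.Iic (0:ℝ), Real.exp (-u ^ 2 / 2)) + ∫ u in (0:ℝ)..x, Real.exp (-u ^ 2 / 2)) := by
    intro x
    rw [normCdf, ← intervalIntegral.integral_Iic_sub_Iic (integrable_gauss.integrableOn)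
      (integrable_gauss.integrableOn)]
    ring
  have h2 : HasDerivAt (fun x => ∫ u in (0:ℝ)..x, Real.exp (-u ^ 2 / 2))
      (Real.exp (-z ^ 2 / 2)) z := by
    exact intervalIntegral.integral_hasDerivAt_right
      (integrable_gauss.intervalIntegrable)
      ((Real.continuous_exp.comp (by continuity)).stronglyMeasurableAtFilter _ _)
      (Real.continuous_exp.comp (by continuity)).continuousAt
  have := ((h2.const_add (∫ u in Set.Iic (0:ℝ), Real.exp (-u ^ 2 / 2))).const_mul
    ((Real.sqrt (2 * Real.pi))⁻¹))
  refine HasDerivAt.congr_of_eventuallyEq (f := fun x => (Real.sqrt (2 * Real.pi))⁻¹ *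
      ((∫ u in Set.Iic (0:ℝ), Real.exp (-u ^ 2 / 2)) + ∫ u in (0:ℝ)..x, Real.exp (-u ^ 2 / 2))) ?_ ?_
  · simpa [normPdf] using this
  · filter_upwards with x using (key x)

lemma normCdf_nonneg (z : ℝ) : 0 ≤ normCdf z := by
  have : 0 ≤ ∫ u in Set.Iic z, Real.exp (-u ^ 2 / 2) :=
    setIntegral_nonneg measurableSet_Iic fun u _ => (Real.exp_pos _).le
  exact mul_nonneg (inv_nonneg.2 sqrt_two_pi_pos.le) this

lemma integral_gauss_total : (∫ u : ℝ, Real.exp (-u ^ 2 / 2)) = Real.sqrt (2 * Real.pi) := by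
  rw [gauss_eq]
  rw [show (fun u : ℝ => Real.exp (-(1/2) * u ^ 2)) = fun u : ℝ => Real.exp (-(1/2) * u ^ 2) from rfl]
  have := integral_gaussian (1/2 : ℝ)
  simp only [one_div] at this ⊢
  rw [this]
  rw [div_inv_eq_mul, mul_comm]

lemma normCdf_le_one (z : ℝ) : normCdf z ≤ 1 := by
  have h1 : (∫ u in Set.Iic z, Real.exp (-u ^ 2 / 2)) ≤ ∫ u : ℝ, Real.exp (-u ^ 2 / 2) :=
    setIntegral_le_integral integrable_gauss (by filter_upwards with u using (Real.exp_pos _).le)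
  rw [normCdf]
  calc (Real.sqrt (2 * Real.pi))⁻¹ * ∫ u in Set.Iic z, Real.exp (-u ^ 2 / 2)
      ≤ (Real.sqrt (2 * Real.pi))⁻¹ * ∫ u : ℝ, Real.exp (-u ^ 2 / 2) := by
        exact mul_le_mul_of_nonneg_left h1 (inv_nonneg.2 sqrt_two_pi_pos.le)
    _ = 1 := by rw [integral_gauss_total, inv_mul_cancel₀ sqrt_two_pi_pos.ne']

lemma normPdf_nonneg (z : ℝ) : 0 ≤ normPdf z :=
  mul_nonneg (inv_nonneg.2 sqrt_two_pi_pos.le) (Real.exp_pos _).le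

lemma normPdf_le (z : ℝ) : normPdf z ≤ (Real.sqrt (2 * Real.pi))⁻¹ := by
  rw [normPdf]
  nth_rewrite 2 [← mul_one ((Real.sqrt (2 * Real.pi))⁻¹)]
  exact mul_le_mul_of_nonneg_left (Real.exp_le_one_iff.2 (by nlinarith [sq_nonneg z])) (inv_nonneg.2 sqrt_two_pi_pos.le)

lemma continuous_normCdf : Continuous normCdf :=
  continuous_iff_continuousAt.2 fun z => (hasDerivAt_normCdf z).continuousAt


/-- The Black–Scholes call price function with strike `K`. -/
noncomputable def qBS (K t y : ℝ) : ℝ :=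
  y * normCdf ((2 * Real.log (y / K) + t) / (2 * Real.sqrt t))
    - K * normCdf ((2 * Real.log (y / K) - t) / (2 * Real.sqrt t))

noncomputable def dplus (K t y : ℝ) : ℝ := (2 * Real.log (y / K) + t) / (2 * Real.sqrt t)
noncomputable def dminus (K t y : ℝ) : ℝ := (2 * Real.log (y / K) - t) / (2 * Real.sqrt t)
noncomputable def g2 (K t y : ℝ) : ℝ := normPdf (dplus K t y) / (y * Real.sqrt t)

lemma hasDerivAt_logdiv {K y : ℝ} (hK : 0 < K) (hy : 0 < y) :
    HasDerivAt (fun z : ℝ => Real.log (z / K)) (1 / y) y := by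
  have := (Real.hasDerivAt_log hy.ne').sub_const (Real.log K)
  refine this.congr_of_eventuallyEq ?_ |>.congr_deriv (by rw [one_div])
  filter_upwards [eventually_gt_nhds hy] with z hz
  rw [Real.log_div hz.ne' hK.ne']

lemma hasDerivAt_dplus {K t y : ℝ} (hK : 0 < K) (ht : 0 < t) (hy : 0 < y) :
    HasDerivAt (fun z => dplus K t z) (1 / (y * Real.sqrt t)) y := by
  have : HasDerivAt (fun z => (2 * Real.log (z / K) + t) / (2 * Real.sqrt t))
      ((2 * (1/y)) / (2 * Real.sqrt t)) y :=
    (((hasDerivAt_logdiv hK hy).const_mul 2).add_const t).div_const _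
  convert this using 1
  have hst : Real.sqrt t > 0 := Real.sqrt_pos.2 ht
  · rfl
  field_simp

lemma hasDerivAt_dminus {K t y : ℝ} (hK : 0 < K) (ht : 0 < t) (hy : 0 < y) :
    HasDerivAt (fun z => dminus K t z) (1 / (y * Real.sqrt t)) y := by
  have : HasDerivAt (fun z => (2 * Real.log (z / K) - t) / (2 * Real.sqrt t))
      ((2 * (1/y)) / (2 * Real.sqrt t)) y :=
    (((hasDerivAt_logdiv hK hy).const_mul 2).sub_const t).div_const _
  convert this using 1
  have hst : Real.sqrt t > 0 := Real.sqrt_pos.2 ht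
  · rfl
  field_simp

lemma pdf_identity {K t y : ℝ} (hK : 0 < K) (ht : 0 < t) (hy : 0 < y) :
    y * normPdf (dplus K t y) = K * normPdf (dminus K t y) := by
  have hst : (0:ℝ) < Real.sqrt t := Real.sqrt_pos.2 ht
  have ht0 : t ≠ 0 := ht.ne'
  have hsq : Real.sqrt t ^ 2 = t := Real.sq_sqrt ht.le
  have hdiff : dplus K t y ^ 2 / 2 - dminus K t y ^ 2 / 2 = Real.log (y / K) := by
    rw [dplus, dminus, div_pow, div_pow,
      show (2 * Real.sqrt t) ^ 2 = 4 * t by rw [mul_pow, hsq]; ring]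
    field_simp
    ring
  have h1 : y * Real.exp (-dplus K t y ^ 2 / 2) = K * Real.exp (-dminus K t y ^ 2 / 2) := by
    rw [Real.log_div hy.ne' hK.ne'] at hdiff
    set A := dplus K t y with hA
    set B := dminus K t y with hB
    clear_value A B
    nth_rewrite 1 [(Real.exp_log hy).symm]
    nth_rewrite 1 [(Real.exp_log hK).symm]
    rw [← Real.exp_add, ← Real.exp_add]
    congr 1
    linarith
  rw [normPdf, normPdf]
  calc y * ((Real.sqrt (2 * Real.pi))⁻¹ * Real.exp (-dplus K t y ^ 2 / 2))
      = (Real.sqrt (2 * Real.pi))⁻¹ * (y * Real.exp (-dplus K t y ^ 2 / 2)) := by ring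
    _ = (Real.sqrt (2 * Real.pi))⁻¹ * (K * Real.exp (-dminus K t y ^ 2 / 2)) := by rw [h1]
    _ = K * ((Real.sqrt (2 * Real.pi))⁻¹ * Real.exp (-dminus K t y ^ 2 / 2)) := by ring

lemma hasDerivAt_qBS {K t y : ℝ} (hK : 0 < K) (ht : 0 < t) (hy : 0 < y) :
    HasDerivAt (fun z => qBS K t z) (normCdf (dplus K t y)) y := by
  have hd1 : HasDerivAt (fun z => normCdf (dplus K t z))
      (normPdf (dplus K t y) * (1 / (y * Real.sqrt t))) y :=
    (hasDerivAt_normCdf _).comp y (hasDerivAt_dplus hK ht hy)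
  have hd2 : HasDerivAt (fun z => normCdf (dminus K t z))
      (normPdf (dminus K t y) * (1 / (y * Real.sqrt t))) y :=
    (hasDerivAt_normCdf _).comp y (hasDerivAt_dminus hK ht hy)
  have hprod : HasDerivAt (fun z => z * normCdf (dplus K t z))
      (1 * normCdf (dplus K t y) + y * (normPdf (dplus K t y) * (1 / (y * Real.sqrt t)))) y :=
    (hasDerivAt_id y).mul hd1
  have h : HasDerivAt (fun z => qBS K t z)
      (1 * normCdf (dplus K t y) + y * (normPdf (dplus K t y) * (1 / (y * Real.sqrt t)))
        - K * (normPdf (dminus K t y) * (1 / (y * Real.sqrt t)))) y := hprod.sub (hd2.const_mul K)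
  convert h using 1
  rw [one_mul]
  have hid := pdf_identity hK ht hy
  have : y * (normPdf (dplus K t y) * (1 / (y * Real.sqrt t)))
      = K * (normPdf (dminus K t y) * (1 / (y * Real.sqrt t))) := by
    rw [← mul_assoc, ← mul_assoc, hid]
  rw [this]; ring

lemma hasDerivAt_qBS' {K t y : ℝ} (hK : 0 < K) (ht : 0 < t) (hy : 0 < y) :
    HasDerivAt (fun z => normCdf (dplus K t z)) (g2 K t y) y := by
  have := (hasDerivAt_normCdf (dplus K t y)).comp y (hasDerivAt_dplus hK ht hy)
  refine this.congr_deriv ?_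
  rw [g2]; field_simp

lemma normPdf_nonneg' (z : ℝ) : 0 ≤ normPdf z :=
  mul_nonneg (inv_nonneg.2 sqrt_two_pi_pos.le) (Real.exp_pos _).le

lemma g2_nonneg {K t y : ℝ} (ht : 0 ≤ t) (hy : 0 ≤ y) : 0 ≤ g2 K t y :=
  div_nonneg (normPdf_nonneg' _) (mul_nonneg hy (Real.sqrt_nonneg t))

lemma g2_le {K t y : ℝ} (hK : 0 < K) (ht : 0 < t) (hy : 0 < y) :
    g2 K t y ≤ (Real.sqrt (2 * Real.pi))⁻¹ / (y * Real.sqrt t) := by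
  apply div_le_div_of_nonneg_right ?_ (by positivity) |>.trans_eq rfl
  rw [normPdf]
  nth_rewrite 2 [← mul_one ((Real.sqrt (2 * Real.pi))⁻¹)]
  exact mul_le_mul_of_nonneg_left (Real.exp_le_one_iff.2 (by nlinarith [sq_nonneg (dplus K t y)]))
    (inv_nonneg.2 sqrt_two_pi_pos.le)

lemma g2_bound {K t y : ℝ} (hK : 0 < K) (ht : 0 < t) (hy : 0 < y) : y ^ 2 / 2 * g2 K t y
    ≤ Real.sqrt (K * y) / (2 * Real.sqrt (2 * Real.pi) * Real.sqrt t) := by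
  have hst : (0:ℝ) < Real.sqrt t := Real.sqrt_pos.2 ht
  have key : y * Real.exp (-dplus K t y ^ 2 / 2) ≤ Real.sqrt (K * y) := by
    set x := Real.log (y / K) with hx
    have hsq : Real.sqrt t ^ 2 = t := Real.sq_sqrt ht.le
    have hd2 : dplus K t y ^ 2 = x ^ 2 / t + x + t / 4 := by
      rw [dplus, div_pow, show (2 * Real.sqrt t) ^ 2 = 4 * t by rw [mul_pow, hsq]; ring]
      field_simp; ring
    have h1 : Real.exp (-dplus K t y ^ 2 / 2) ≤ Real.exp (-x / 2) := by
      apply Real.exp_le_exp.2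
      rw [hd2]
      have h0 : 0 ≤ x ^ 2 / t := by positivity
      nlinarith
    have hsq2 : (y * Real.exp (-x / 2)) ^ 2 = K * y := by
      have hexp : Real.exp (-x / 2) ^ 2 = K / y := by
        rw [sq, ← Real.exp_add, show -x/2 + -x/2 = -x by ring, hx,
          ← Real.log_inv, inv_div, Real.exp_log (div_pos hK hy)]
      rw [mul_pow, hexp]
      field_simp
    have h2 : y * Real.exp (-x / 2) = Real.sqrt (K * y) := by
      rw [← hsq2, Real.sqrt_sq (by positivity)]
    calc y * Real.exp (-dplus K t y ^ 2 / 2) ≤ y * Real.exp (-x / 2) :=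
          mul_le_mul_of_nonneg_left h1 hy.le
      _ = Real.sqrt (K * y) := h2
  have heq : y ^ 2 / 2 * g2 K t y
      = (y * Real.exp (-dplus K t y ^ 2 / 2)) / (2 * Real.sqrt (2 * Real.pi) * Real.sqrt t) := by
    rw [g2, normPdf]
    have h2pi : Real.sqrt (2 * Real.pi) ≠ 0 := sqrt_two_pi_pos.ne'
    field_simp
  rw [heq]
  exact div_le_div_of_nonneg_right key (by positivity) |>.trans_eq rfl

lemma complex_eq_real_on_Ioc {a b : ℝ} :
    ∀ x ∈ Ioc (0:ℝ) 1, (fun x : ℝ => ((x : ℂ) ^ ((a:ℂ) - 1) * (1 - (x : ℂ)) ^ ((b:ℂ) - 1))) x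
      = ((fun x : ℝ => ((x ^ (a-1) * (1-x) ^ (b-1) : ℝ) : ℂ)) x) := by
  intro x hx
  have hx0 : (0:ℝ) ≤ x := hx.1.le
  have hx1 : (0:ℝ) ≤ 1 - x := by linarith [hx.2]
  dsimp only
  rw [show ((a:ℂ) - 1) = ((a - 1 : ℝ) : ℂ) by push_cast; ring,
    show ((b:ℂ) - 1) = ((b - 1 : ℝ) : ℂ) by push_cast; ring,
    ← Complex.ofReal_cpow hx0]
  rw [show (1 - (x:ℂ)) = ((1 - x : ℝ) : ℂ) by push_cast; ring, ← Complex.ofReal_cpow hx1]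
  push_cast
  ring

lemma betaReal_integrable {a b : ℝ} (ha : 0 < a) (hb : 0 < b) :
    IntegrableOn (fun s : ℝ => s ^ (a-1) * (1-s) ^ (b-1)) (Ioo (0:ℝ) 1) := by
  have h := Complex.betaIntegral_convergent (u := (a:ℂ)) (v := (b:ℂ)) (by simpa) (by simpa)
  have h2 : IntegrableOn (fun x : ℝ => ((x : ℂ) ^ ((a:ℂ) - 1) * (1 - (x : ℂ)) ^ ((b:ℂ) - 1)))
      (Ioc (0:ℝ) 1) := h.1
  have h3 : IntegrableOn (fun x : ℝ => ((x ^ (a-1) * (1-x) ^ (b-1) : ℝ) : ℂ)) (Ioc (0:ℝ) 1) :=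
    h2.congr_fun complex_eq_real_on_Ioc measurableSet_Ioc
  have h4 : IntegrableOn (fun s : ℝ => s ^ (a-1) * (1-s) ^ (b-1)) (Ioc (0:ℝ) 1) := by
    have := h3.re
    simpa [IntegrableOn] using this
  exact h4.mono_set Ioo_subset_Ioc_self

lemma betaReal_value {a b : ℝ} (ha : 0 < a) (hb : 0 < b) :
    ∫ s in Ioo (0:ℝ) 1, s ^ (a-1) * (1-s) ^ (b-1)
      = Real.Gamma a * Real.Gamma b / Real.Gamma (a+b) := by
  have hβ := Complex.Gamma_mul_Gamma_eq_betaIntegral (s := (a:ℂ)) (t := (b:ℂ)) (by simpa) (by simpa)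
  have hbeta : Complex.betaIntegral (a:ℂ) (b:ℂ)
      = ((∫ s in Ioo (0:ℝ) 1, s ^ (a-1) * (1-s) ^ (b-1) : ℝ) : ℂ) := by
    rw [Complex.betaIntegral, intervalIntegral.integral_of_le (by norm_num : (0:ℝ) ≤ 1)]
    rw [setIntegral_congr_fun measurableSet_Ioc complex_eq_real_on_Ioc]
    rw [← Measure.restrict_congr_set Ioo_ae_eq_Ioc.symm]
    exact integral_ofReal
  rw [hbeta] at hβ
  have hGa : Complex.Gamma (a:ℂ) = (Real.Gamma a : ℂ) := (Complex.Gamma_ofReal a)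
  have hGb : Complex.Gamma (b:ℂ) = (Real.Gamma b : ℂ) := (Complex.Gamma_ofReal b)
  have hGab : Complex.Gamma ((a:ℂ) + (b:ℂ)) = (Real.Gamma (a+b) : ℂ) := by
    rw [← Complex.ofReal_add, Complex.Gamma_ofReal]
  rw [hGa, hGb, hGab] at hβ
  have h2 : (Real.Gamma a * Real.Gamma b : ℝ)
      = Real.Gamma (a+b) * ∫ s in Ioo (0:ℝ) 1, s ^ (a-1) * (1-s) ^ (b-1) := by
    exact_mod_cast hβ
  have hpos : 0 < Real.Gamma (a+b) := Real.Gamma_pos_of_pos (by linarith)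
  field_simp
  linarith [h2]



noncomputable def wgt (α s : ℝ) : ℝ := s ^ (α - 1) * (1 - s) ^ (-α)

section D
variable {K α t : ℝ}

lemma wgt_nonneg {s : ℝ} (hs : s ∈ Ioo (0:ℝ) 1) : 0 ≤ wgt α s :=
  mul_nonneg (Real.rpow_nonneg hs.1.le _) (Real.rpow_nonneg (by linarith [hs.2]) _)

lemma wgt_int (hα : α ∈ Set.Ioo (1/2 : ℝ) 1) : IntegrableOn (wgt α) (Ioo (0:ℝ) 1) := by
  have := betaReal_integrable (a := α) (b := 1 - α) (by linarith [hα.1]) (by linarith [hα.2])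
  show IntegrableOn (fun s : ℝ => s ^ (α - 1) * (1 - s) ^ (-α)) (Ioo (0:ℝ) 1)
  simpa [wgt, show (1 - α) - 1 = -α by ring] using this

lemma wgt_value (hα : α ∈ Set.Ioo (1/2 : ℝ) 1) :
    ∫ s in Ioo (0:ℝ) 1, wgt α s = Real.Gamma α * Real.Gamma (1 - α) := by
  have := betaReal_value (a := α) (b := 1 - α) (by linarith [hα.1]) (by linarith [hα.2])
  simp only [show α + (1 - α) = 1 by ring, Real.Gamma_one, div_one] at this
  simpa [wgt, show (1 - α) - 1 = -α by ring] using this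

lemma wgt2_int (hα : α ∈ Set.Ioo (1/2 : ℝ) 1) :
    IntegrableOn (fun s : ℝ => s ^ (α - 3/2) * (1 - s) ^ (-α)) (Ioo (0:ℝ) 1) := by
  have := betaReal_integrable (a := α - 1/2) (b := 1 - α) (by linarith [hα.1]) (by linarith [hα.2])
  simp only [show α - 1/2 - 1 = α - 3/2 by ring, show (1 - α) - 1 = -α by ring] at this
  exact this

lemma wgt2_value (hα : α ∈ Set.Ioo (1/2 : ℝ) 1) :
    ∫ s in Ioo (0:ℝ) 1, s ^ (α - 3/2) * (1 - s) ^ (-α)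
      = Real.Gamma (α - 1/2) * Real.Gamma (1 - α) / Real.sqrt Real.pi := by
  have := betaReal_value (a := α - 1/2) (b := 1 - α) (by linarith [hα.1]) (by linarith [hα.2])
  rw [show α - 1/2 + (1 - α) = 1/2 by ring, Real.Gamma_one_half_eq] at this
  simp only [show α - 1/2 - 1 = α - 3/2 by ring, show (1 - α) - 1 = -α by ring] at this
  exact this

lemma wgt_mul_rpow {s : ℝ} (hs : s ∈ Ioo (0:ℝ) 1) :
    wgt α s * s ^ (-(1/2) : ℝ) = s ^ (α - 3/2) * (1 - s) ^ (-α) := by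
  rw [wgt, mul_right_comm, ← Real.rpow_add hs.1,
    show α - 1 + -(1/2:ℝ) = α - 3/2 by ring]

lemma continuousAt_wgt {s : ℝ} (hs : s ∈ Ioo (0:ℝ) 1) : ContinuousAt (wgt α) s := by
  apply ContinuousAt.mul
  · exact Real.continuousAt_rpow_const _ _ (Or.inl hs.1.ne')
  · exact (Real.continuousAt_rpow_const _ _ (Or.inl (by linarith [hs.2] : 1 - s ≠ 0))).comp
      (by fun_prop)

lemma continuousAt_dplus_param (hK : 0 < K) (ht : 0 < t) (x : ℝ) {s : ℝ}
    (hs : s ∈ Ioo (0:ℝ) 1) : ContinuousAt (fun a : ℝ => dplus K (t * a) x) s := by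
  have hts : 0 < t * s := mul_pos ht hs.1
  unfold dplus
  apply ContinuousAt.div
  · fun_prop
  · fun_prop
  · have : (0:ℝ) < Real.sqrt (t * s) := Real.sqrt_pos.2 hts
    positivity

lemma continuousAt_qBS_param (hK : 0 < K) (ht : 0 < t) (x : ℝ) {s : ℝ}
    (hs : s ∈ Ioo (0:ℝ) 1) : ContinuousAt (fun a : ℝ => qBS K (t * a) x) s := by
  have hts : 0 < t * s := mul_pos ht hs.1
  have hsqrt : (0:ℝ) < Real.sqrt (t * s) := Real.sqrt_pos.2 hts
  have hden : ContinuousAt (fun a : ℝ => 2 * Real.sqrt (t * a)) s := by fun_prop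
  have hne : (2 : ℝ) * Real.sqrt (t * s) ≠ 0 := by positivity
  have h1 : ContinuousAt (fun a : ℝ => (2 * Real.log (x / K) + t * a) / (2 * Real.sqrt (t * a))) s :=
    ContinuousAt.div (by fun_prop) hden hne
  have h2 : ContinuousAt (fun a : ℝ => (2 * Real.log (x / K) - t * a) / (2 * Real.sqrt (t * a))) s :=
    ContinuousAt.div (by fun_prop) hden hne
  unfold qBS
  exact (continuousAt_const.mul (continuous_normCdf.continuousAt.comp h1)).sub
    (continuousAt_const.mul (continuous_normCdf.continuousAt.comp h2))

lemma continuousAt_g2_param (hK : 0 < K) (ht : 0 < t) {x : ℝ} (hx : 0 < x) {s : ℝ}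
    (hs : s ∈ Ioo (0:ℝ) 1) : ContinuousAt (fun a : ℝ => g2 K (t * a) x) s := by
  have hts : 0 < t * s := mul_pos ht hs.1
  have hsqrt : (0:ℝ) < Real.sqrt (t * s) := Real.sqrt_pos.2 hts
  have hden : ContinuousAt (fun a : ℝ => 2 * Real.sqrt (t * a)) s := by fun_prop
  have hne : (2 : ℝ) * Real.sqrt (t * s) ≠ 0 := by positivity
  have h1 : ContinuousAt (fun a : ℝ => (2 * Real.log (x / K) + t * a) / (2 * Real.sqrt (t * a))) s :=
    ContinuousAt.div (by fun_prop) hden hne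
  have h1' : ContinuousAt (fun a : ℝ => dplus K (t * a) x) s := h1
  have hpdf : ContinuousAt (fun a : ℝ => normPdf (dplus K (t * a) x)) s := by
    have hc : Continuous normPdf := by unfold normPdf; fun_prop
    exact hc.continuousAt.comp h1'
  have hden2 : ContinuousAt (fun a : ℝ => x * Real.sqrt (t * a)) s := by fun_prop
  have hne2 : x * Real.sqrt (t * s) ≠ 0 := by positivity
  exact ContinuousAt.div hpdf hden2 hne2

lemma ball_pos {x y : ℝ} (hy : 0 < y) (hx : x ∈ Metric.ball y (y/2)) : y/2 < x := by
  rw [Real.ball_eq_Ioo] at hx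
  linarith [hx.1]

end D

section D2
variable {K α t : ℝ}

lemma continuous_normPdf : Continuous normPdf := by unfold normPdf; fun_prop

lemma continuousAt_g2_space (hK : 0 < K) {τ : ℝ} (hτ : 0 < τ) {y : ℝ} (hy : 0 < y) :
    ContinuousAt (fun x => g2 K τ x) y := by
  have h1 : ContinuousAt (fun x => dplus K τ x) y := (hasDerivAt_dplus hK hτ hy).continuousAt
  have hne : y * Real.sqrt τ ≠ 0 := by
    have := Real.sqrt_pos.2 hτ; positivity
  exact ((continuous_normPdf.continuousAt.comp h1).div (by fun_prop) hne)

lemma qBS_abs_le {τ x : ℝ} (hK : 0 < K) (hx : 0 ≤ x) : |qBS K τ x| ≤ x + K := by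
  rw [qBS]
  have h1 : |x * normCdf ((2 * Real.log (x / K) + τ) / (2 * Real.sqrt τ))| ≤ x := by
    rw [abs_mul, abs_of_nonneg hx]
    calc x * |normCdf _| ≤ x * 1 := by
          refine mul_le_mul_of_nonneg_left ?_ hx
          rw [abs_of_nonneg (normCdf_nonneg _)]; exact normCdf_le_one _
      _ = x := mul_one x
  have h2 : |K * normCdf ((2 * Real.log (x / K) - τ) / (2 * Real.sqrt τ))| ≤ K := by
    rw [abs_mul, abs_of_nonneg hK.le]
    calc K * |normCdf _| ≤ K * 1 := by
          refine mul_le_mul_of_nonneg_left ?_ hK.le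
          rw [abs_of_nonneg (normCdf_nonneg _)]; exact normCdf_le_one _
      _ = K := mul_one K
  calc |_ - _| ≤ |_| + |_| := abs_sub _ _
    _ ≤ x + K := add_le_add h1 h2

lemma aesm_wgt : AEStronglyMeasurable (wgt α) (volume.restrict (Ioo (0:ℝ) 1)) := by
  have h : ContinuousOn (wgt α) (Ioo (0:ℝ) 1) :=
    fun s hs => (continuousAt_wgt hs).continuousWithinAt
  exact h.aestronglyMeasurable measurableSet_Ioo

lemma aesm_qBS (hK : 0 < K) (ht : 0 < t) (x : ℝ) :
    AEStronglyMeasurable (fun a => wgt α a * qBS K (t * a) x)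
      (volume.restrict (Ioo (0:ℝ) 1)) := by
  refine aesm_wgt.mul ?_
  have h : ContinuousOn (fun a => qBS K (t * a) x) (Ioo (0:ℝ) 1) :=
    fun s hs => (continuousAt_qBS_param hK ht x hs).continuousWithinAt
  exact h.aestronglyMeasurable measurableSet_Ioo

lemma aesm_cdf (hK : 0 < K) (ht : 0 < t) (x : ℝ) :
    AEStronglyMeasurable (fun a => wgt α a * normCdf (dplus K (t * a) x))
      (volume.restrict (Ioo (0:ℝ) 1)) := by
  refine aesm_wgt.mul ?_
  refine (ContinuousOn.aestronglyMeasurable ?_ measurableSet_Ioo)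
  intro s hs
  exact (continuous_normCdf.continuousAt.comp
    (continuousAt_dplus_param hK ht x hs)).continuousWithinAt

lemma aesm_g2 (hK : 0 < K) (ht : 0 < t) {x : ℝ} (hx : 0 < x) :
    AEStronglyMeasurable (fun a => wgt α a * g2 K (t * a) x)
      (volume.restrict (Ioo (0:ℝ) 1)) := by
  refine aesm_wgt.mul ?_
  have h : ContinuousOn (fun a => g2 K (t * a) x) (Ioo (0:ℝ) 1) :=
    fun s hs => (continuousAt_g2_param hK ht hx hs).continuousWithinAt
  exact h.aestronglyMeasurable measurableSet_Ioo

lemma D1 (hK : 0 < K) (hα : α ∈ Set.Ioo (1/2:ℝ) 1) (ht : 0 < t) {y : ℝ} (hy : 0 < y) :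
    Integrable (fun a => wgt α a * normCdf (dplus K (t*a) y))
      (volume.restrict (Ioo (0:ℝ) 1)) ∧
    HasDerivAt (fun x => ∫ a in Ioo (0:ℝ) 1, wgt α a * qBS K (t*a) x)
      (∫ a in Ioo (0:ℝ) 1, wgt α a * normCdf (dplus K (t*a) y)) y := by
  refine hasDerivAt_integral_of_dominated_loc_of_deriv_le
    (μ := volume.restrict (Ioo (0:ℝ) 1))
    (F := fun x a => wgt α a * qBS K (t*a) x)
    (F' := fun x a => wgt α a * normCdf (dplus K (t*a) x))
    (x₀ := y) (bound := wgt α) (s := Metric.ball y (y/2))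
    (Metric.ball_mem_nhds y (by positivity : (0:ℝ) < y/2)) ?_ ?_ ?_ ?_ ?_ ?_
  · filter_upwards with x using aesm_qBS hK ht x
  · refine ((wgt_int hα).mul_const (y + K)).mono' (aesm_qBS hK ht y) ?_
    rw [ae_restrict_iff' measurableSet_Ioo]
    filter_upwards with a ha
    rw [norm_mul, Real.norm_eq_abs, Real.norm_eq_abs, abs_of_nonneg (wgt_nonneg ha)]
    exact mul_le_mul_of_nonneg_left (qBS_abs_le hK hy.le) (wgt_nonneg ha)
  · exact aesm_cdf hK ht y
  · rw [ae_restrict_iff' measurableSet_Ioo]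
    filter_upwards with a ha x _
    rw [norm_mul, Real.norm_eq_abs, Real.norm_eq_abs, abs_of_nonneg (wgt_nonneg ha)]
    calc wgt α a * |normCdf (dplus K (t*a) x)| ≤ wgt α a * 1 := by
          refine mul_le_mul_of_nonneg_left ?_ (wgt_nonneg ha)
          rw [abs_of_nonneg (normCdf_nonneg _)]; exact normCdf_le_one _
      _ = wgt α a := mul_one _
  · exact wgt_int hα
  · rw [ae_restrict_iff' measurableSet_Ioo]
    filter_upwards with a ha x hx
    exact (hasDerivAt_qBS hK (mul_pos ht ha.1) ((by positivity : (0:ℝ) < y/2).trans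
      (ball_pos hy hx))).const_mul (wgt α a)

lemma g2_ball_bound (hK : 0 < K) (ht : 0 < t) {y : ℝ} (hy : 0 < y)
    {a : ℝ} (ha : a ∈ Ioo (0:ℝ) 1) {x : ℝ} (hx : x ∈ Metric.ball y (y/2)) :
    ‖wgt α a * g2 K (t*a) x‖
      ≤ (Real.sqrt (2 * Real.pi))⁻¹ * ((y/2) * Real.sqrt t)⁻¹
          * (a ^ (α - 3/2) * (1 - a) ^ (-α)) := by
  have hx0 : (0:ℝ) < x := (by positivity : (0:ℝ) < y/2).trans (ball_pos hy hx)
  have hta : 0 < t * a := mul_pos ht ha.1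
  have hsta : 0 < Real.sqrt (t * a) := Real.sqrt_pos.2 hta
  have hsa : 0 < Real.sqrt a := Real.sqrt_pos.2 ha.1
  have hst : 0 < Real.sqrt t := Real.sqrt_pos.2 ht
  rw [norm_mul, Real.norm_eq_abs, Real.norm_eq_abs, abs_of_nonneg (wgt_nonneg ha),
    abs_of_nonneg (g2_nonneg hta.le hx0.le)]
  have h1 : g2 K (t*a) x ≤ (Real.sqrt (2 * Real.pi))⁻¹ / (x * Real.sqrt (t*a)) :=
    g2_le hK hta hx0
  have h2 : (Real.sqrt (2 * Real.pi))⁻¹ / (x * Real.sqrt (t*a))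
      ≤ (Real.sqrt (2 * Real.pi))⁻¹ / ((y/2) * Real.sqrt (t*a)) := by
    apply div_le_div_of_nonneg_left (inv_nonneg.2 sqrt_two_pi_pos.le)
      (by positivity)
    exact mul_le_mul_of_nonneg_right (ball_pos hy hx).le hsta.le
  have h3 : (Real.sqrt (2 * Real.pi))⁻¹ / ((y/2) * Real.sqrt (t*a))
      = ((Real.sqrt (2 * Real.pi))⁻¹ * ((y/2) * Real.sqrt t)⁻¹) * a ^ (-(1/2):ℝ) := by
    rw [Real.sqrt_mul ht.le, Real.rpow_neg ha.1.le, ← Real.sqrt_eq_rpow]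
    have h2pi : Real.sqrt (2 * Real.pi) ≠ 0 := sqrt_two_pi_pos.ne'
    field_simp
  calc wgt α a * g2 K (t*a) x
      ≤ wgt α a * (((Real.sqrt (2 * Real.pi))⁻¹ * ((y/2) * Real.sqrt t)⁻¹) * a ^ (-(1/2):ℝ)) := by
        refine mul_le_mul_of_nonneg_left ((h1.trans h2).trans_eq h3) (wgt_nonneg ha)
    _ = (Real.sqrt (2 * Real.pi))⁻¹ * ((y/2) * Real.sqrt t)⁻¹
          * (wgt α a * a ^ (-(1/2):ℝ)) := by ring
    _ = (Real.sqrt (2 * Real.pi))⁻¹ * ((y/2) * Real.sqrt t)⁻¹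
          * (a ^ (α - 3/2) * (1 - a) ^ (-α)) := by rw [wgt_mul_rpow ha]

end D2

section D3
variable {K α t : ℝ}

lemma D2 (hK : 0 < K) (hα : α ∈ Set.Ioo (1/2:ℝ) 1) (ht : 0 < t) {y : ℝ} (hy : 0 < y) :
    Integrable (fun a => wgt α a * g2 K (t*a) y) (volume.restrict (Ioo (0:ℝ) 1)) ∧
    HasDerivAt (fun x => ∫ a in Ioo (0:ℝ) 1, wgt α a * normCdf (dplus K (t*a) x))
      (∫ a in Ioo (0:ℝ) 1, wgt α a * g2 K (t*a) y) y := by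
  refine hasDerivAt_integral_of_dominated_loc_of_deriv_le
    (μ := volume.restrict (Ioo (0:ℝ) 1))
    (F := fun x a => wgt α a * normCdf (dplus K (t*a) x))
    (F' := fun x a => wgt α a * g2 K (t*a) x)
    (x₀ := y)
    (bound := fun a => (Real.sqrt (2 * Real.pi))⁻¹ * ((y/2) * Real.sqrt t)⁻¹
      * (a ^ (α - 3/2) * (1 - a) ^ (-α)))
    (s := Metric.ball y (y/2))
    (Metric.ball_mem_nhds y (by positivity : (0:ℝ) < y/2)) ?_ ?_ ?_ ?_ ?_ ?_
  · filter_upwards with x using aesm_cdf hK ht x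
  · refine (wgt_int hα).mono' (aesm_cdf hK ht y) ?_
    rw [ae_restrict_iff' measurableSet_Ioo]
    filter_upwards with a ha
    rw [norm_mul, Real.norm_eq_abs, Real.norm_eq_abs, abs_of_nonneg (wgt_nonneg ha)]
    calc wgt α a * |normCdf (dplus K (t*a) y)| ≤ wgt α a * 1 := by
          refine mul_le_mul_of_nonneg_left ?_ (wgt_nonneg ha)
          rw [abs_of_nonneg (normCdf_nonneg _)]; exact normCdf_le_one _
      _ = wgt α a := mul_one _
  · exact aesm_g2 hK ht hy
  · rw [ae_restrict_iff' measurableSet_Ioo]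
    filter_upwards with a ha x hx
    exact g2_ball_bound hK ht hy ha hx
  · exact ((wgt2_int hα).const_mul _)
  · rw [ae_restrict_iff' measurableSet_Ioo]
    filter_upwards with a ha x hx
    exact (hasDerivAt_qBS' hK (mul_pos ht ha.1) ((by positivity : (0:ℝ) < y/2).trans
      (ball_pos hy hx))).const_mul (wgt α a)

lemma cont2 (hK : 0 < K) (hα : α ∈ Set.Ioo (1/2:ℝ) 1) (ht : 0 < t) {y : ℝ} (hy : 0 < y) :
    ContinuousAt (fun x => ∫ a in Ioo (0:ℝ) 1, wgt α a * g2 K (t*a) x) y := by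
  refine continuousAt_of_dominated (bound := fun a => (Real.sqrt (2 * Real.pi))⁻¹
      * ((y/2) * Real.sqrt t)⁻¹ * (a ^ (α - 3/2) * (1 - a) ^ (-α))) ?_ ?_ ?_ ?_
  · filter_upwards [Metric.ball_mem_nhds y (by positivity : (0:ℝ) < y/2)] with x hx
    exact aesm_g2 hK ht ((by positivity : (0:ℝ) < y/2).trans (ball_pos hy hx))
  · filter_upwards [Metric.ball_mem_nhds y (by positivity : (0:ℝ) < y/2)] with x hx
    rw [ae_restrict_iff' measurableSet_Ioo]
    filter_upwards with a ha
    exact g2_ball_bound hK ht hy ha hx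
  · exact ((wgt2_int hα).const_mul _)
  · rw [ae_restrict_iff' measurableSet_Ioo]
    filter_upwards with a ha
    exact continuousAt_const.mul (continuousAt_g2_space hK (mul_pos ht ha.1) hy)

end D3


noncomputable def qStar (K α t y : ℝ) : ℝ :=
  if t = 0 then max (y - K) 0
  else (Real.Gamma α * Real.Gamma (1 - α))⁻¹ *
    ∫ s in Set.Ioo (0 : ℝ) 1, s ^ (α - 1) * (1 - s) ^ (-α) * qBS K (t * s) y

/-- For each `t > 0`, `y ↦ q*(t,y)` is `C²` on `(0,∞)`, with first
and second derivatives obtained by differentiation under the integral sign, and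
`0 ≤ ∂_y q* ≤ 1`, `0 ≤ (y²/2)∂²_y q* ≤ (Γ(α−1/2)/(2πΓ(α))) √(Ky/(2t))`. -/
theorem qStar_space_derivatives
    (K α : ℝ) (hK : 0 < K) (hα : α ∈ Set.Ioo (1 / 2 : ℝ) 1) :
    ∀ t : ℝ, 0 < t →
      ContDiffOn ℝ 2 (fun y => qStar K α t y) (Set.Ioi (0 : ℝ))
      ∧ (∀ y : ℝ, 0 < y →
          deriv (fun z => qStar K α t z) y
            = (Real.Gamma α * Real.Gamma (1 - α))⁻¹ *
                ∫ τ in Set.Ioo (0 : ℝ) 1,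
                  deriv (fun z => qBS K (τ * t) z) y * τ ^ (α - 1) * (1 - τ) ^ (-α))
      ∧ (∀ y : ℝ, 0 < y →
          deriv (deriv (fun z => qStar K α t z)) y
            = (Real.Gamma α * Real.Gamma (1 - α))⁻¹ *
                ∫ τ in Set.Ioo (0 : ℝ) 1,
                  deriv (deriv (fun z => qBS K (τ * t) z)) y * τ ^ (α - 1) * (1 - τ) ^ (-α))
      ∧ (∀ y : ℝ, 0 < y →
          0 ≤ deriv (fun z => qStar K α t z) y ∧ deriv (fun z => qStar K α t z) y ≤ 1)
      ∧ (∀ y : ℝ, 0 < y →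
          0 ≤ y ^ 2 / 2 * deriv (deriv (fun z => qStar K α t z)) y
          ∧ y ^ 2 / 2 * deriv (deriv (fun z => qStar K α t z)) y
              ≤ Real.Gamma (α - 1 / 2) / (2 * Real.pi * Real.Gamma α)
                  * Real.sqrt (K * y / (2 * t))) := by
  intro t ht
  set c : ℝ := (Real.Gamma α * Real.Gamma (1 - α))⁻¹ with hc
  have hGα : 0 < Real.Gamma α := Real.Gamma_pos_of_pos (by linarith [hα.1])
  have hGα' : 0 < Real.Gamma (1 - α) := Real.Gamma_pos_of_pos (by linarith [hα.2])
  have hc_pos : 0 < c := by rw [hc]; positivity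
  -- qStar as an explicit integral
  have hqStar : (fun y => qStar K α t y)
      = fun x => c * ∫ a in Ioo (0:ℝ) 1, wgt α a * qBS K (t*a) x := by
    funext x
    rw [qStar, if_neg ht.ne', ← hc]
    simp only [wgt]
  have hqStar' : (fun z => qStar K α t z)
      = fun x => c * ∫ a in Ioo (0:ℝ) 1, wgt α a * qBS K (t*a) x := hqStar
  -- first derivative
  have hD1 : ∀ {y : ℝ}, 0 < y → HasDerivAt (fun z => qStar K α t z)
      (c * ∫ a in Ioo (0:ℝ) 1, wgt α a * normCdf (dplus K (t*a) y)) y := by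
    intro y hy
    rw [hqStar']
    exact ((D1 hK hα ht hy).2).const_mul c
  have hderiv1 : ∀ {y : ℝ}, 0 < y → deriv (fun z => qStar K α t z) y
      = c * ∫ a in Ioo (0:ℝ) 1, wgt α a * normCdf (dplus K (t*a) y) := fun hy =>
    (hD1 hy).deriv
  -- G1 and second derivative
  set G1 : ℝ → ℝ := fun x => c * ∫ a in Ioo (0:ℝ) 1, wgt α a * normCdf (dplus K (t*a) x)
    with hG1def
  have hG1 : ∀ {y : ℝ}, 0 < y → HasDerivAt G1
      (c * ∫ a in Ioo (0:ℝ) 1, wgt α a * g2 K (t*a) y) y := fun hy =>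
    ((D2 hK hα ht hy).2).const_mul c
  have hev : ∀ {y : ℝ}, 0 < y → deriv (fun z => qStar K α t z) =ᶠ[nhds y] G1 := by
    intro y hy
    filter_upwards [Ioi_mem_nhds hy] with x hx
    exact hderiv1 hx
  have hderiv2 : ∀ {y : ℝ}, 0 < y → deriv (deriv (fun z => qStar K α t z)) y
      = c * ∫ a in Ioo (0:ℝ) 1, wgt α a * g2 K (t*a) y := by
    intro y hy
    rw [(hev hy).deriv_eq]
    exact (hG1 hy).deriv
  -- pointwise identification of qBS derivatives
  have hqBSderiv : ∀ {y : ℝ}, 0 < y → ∀ τ ∈ Ioo (0:ℝ) 1,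
      deriv (fun z => qBS K (τ * t) z) y = normCdf (dplus K (t*τ) y) := by
    intro y hy τ hτ
    rw [mul_comm τ t]
    exact (hasDerivAt_qBS hK (mul_pos ht hτ.1) hy).deriv
  have hqBSderiv2 : ∀ {y : ℝ}, 0 < y → ∀ τ ∈ Ioo (0:ℝ) 1,
      deriv (deriv (fun z => qBS K (τ * t) z)) y = g2 K (t*τ) y := by
    intro y hy τ hτ
    rw [mul_comm τ t]
    have hτt : 0 < t * τ := mul_pos ht hτ.1
    have hevq : deriv (fun z => qBS K (t*τ) z) =ᶠ[nhds y]
        fun x => normCdf (dplus K (t*τ) x) := by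
      filter_upwards [Ioi_mem_nhds hy] with x hx
      exact (hasDerivAt_qBS hK hτt hx).deriv
    rw [hevq.deriv_eq]
    exact (hasDerivAt_qBS' hK hτt hy).deriv
  refine ⟨?_, ?_, ?_, ?_, ?_⟩
  · -- ContDiffOn 2
    rw [hqStar]
    rw [show ((2 : WithTop ℕ∞)) = (1 : WithTop ℕ∞) + 1 by rfl]
    rw [contDiffOn_succ_iff_deriv_of_isOpen isOpen_Ioi]
    refine ⟨?_, by simp, ?_⟩
    · intro x hx
      exact (((D1 hK hα ht hx).2).const_mul c).differentiableAt.differentiableWithinAt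
    · have hcd1 : ContDiffOn ℝ 1 G1 (Ioi (0:ℝ)) := by
        rw [show ((1 : WithTop ℕ∞)) = (0 : WithTop ℕ∞) + 1 by rfl]
        rw [contDiffOn_succ_iff_deriv_of_isOpen isOpen_Ioi]
        refine ⟨?_, by simp, ?_⟩
        · intro x hx
          exact (hG1 hx).differentiableAt.differentiableWithinAt
        · rw [contDiffOn_zero]
          have hcG2 : ContinuousOn
              (fun x => c * ∫ a in Ioo (0:ℝ) 1, wgt α a * g2 K (t*a) x) (Ioi (0:ℝ)) :=
            fun x hx => (continuousAt_const.mul (cont2 hK hα ht hx)).continuousWithinAt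
          exact hcG2.congr fun x hx => (hG1 hx).deriv
      refine hcd1.congr fun x hx => ?_
      have : deriv (fun x => c * ∫ a in Ioo (0:ℝ) 1, wgt α a * qBS K (t*a) x) x = G1 x := by
        exact (((D1 hK hα ht hx).2).const_mul c).deriv
      exact this
  · -- first derivative formula
    intro y hy
    rw [hderiv1 hy]
    congr 1
    refine (setIntegral_congr_fun measurableSet_Ioo fun τ hτ => ?_).symm
    rw [hqBSderiv hy τ hτ, wgt]
    ring
  · -- second derivative formula
    intro y hy
    rw [hderiv2 hy]
    congr 1
    refine (setIntegral_congr_fun measurableSet_Ioo fun τ hτ => ?_).symm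
    rw [hqBSderiv2 hy τ hτ, wgt]
    ring
  · -- first derivative bounds
    intro y hy
    rw [hderiv1 hy]
    constructor
    · refine mul_nonneg hc_pos.le (setIntegral_nonneg measurableSet_Ioo fun a ha => ?_)
      exact mul_nonneg (wgt_nonneg ha) (normCdf_nonneg _)
    · have hmono : (∫ a in Ioo (0:ℝ) 1, wgt α a * normCdf (dplus K (t*a) y))
          ≤ ∫ a in Ioo (0:ℝ) 1, wgt α a := by
        refine setIntegral_mono_on (D1 hK hα ht hy).1 (wgt_int hα) measurableSet_Ioo
          fun a ha => ?_
        calc wgt α a * normCdf (dplus K (t*a) y) ≤ wgt α a * 1 :=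
              mul_le_mul_of_nonneg_left (normCdf_le_one _) (wgt_nonneg ha)
          _ = wgt α a := mul_one _
      calc c * (∫ a in Ioo (0:ℝ) 1, wgt α a * normCdf (dplus K (t*a) y))
          ≤ c * ∫ a in Ioo (0:ℝ) 1, wgt α a := mul_le_mul_of_nonneg_left hmono hc_pos.le
        _ = c * (Real.Gamma α * Real.Gamma (1 - α)) := by rw [wgt_value hα]
        _ = 1 := by rw [hc]; field_simp
  · -- second derivative bounds
    intro y hy
    rw [hderiv2 hy]
    have hint_nonneg : 0 ≤ ∫ a in Ioo (0:ℝ) 1, wgt α a * g2 K (t*a) y :=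
      setIntegral_nonneg measurableSet_Ioo fun a ha =>
        mul_nonneg (wgt_nonneg ha) (g2_nonneg (mul_pos ht ha.1).le hy.le)
    constructor
    · positivity
    · set D0 : ℝ := Real.sqrt (K*y) / (2 * Real.sqrt (2*Real.pi) * Real.sqrt t) with hD0
      have hpt : ∀ a ∈ Ioo (0:ℝ) 1, y^2/2 * (wgt α a * g2 K (t*a) y)
          ≤ D0 * (a ^ (α - 3/2) * (1 - a) ^ (-α)) := by
        intro a ha
        have hta : 0 < t * a := mul_pos ht ha.1
        have h1 : y^2/2 * g2 K (t*a) y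
            ≤ Real.sqrt (K*y) / (2 * Real.sqrt (2*Real.pi) * Real.sqrt (t*a)) :=
          g2_bound hK hta hy
        have h2 : Real.sqrt (K*y) / (2 * Real.sqrt (2*Real.pi) * Real.sqrt (t*a))
            = D0 * a ^ (-(1/2):ℝ) := by
          rw [hD0, Real.sqrt_mul ht.le, Real.rpow_neg ha.1.le, ← Real.sqrt_eq_rpow]
          have hsa : 0 < Real.sqrt a := Real.sqrt_pos.2 ha.1
          have hst : 0 < Real.sqrt t := Real.sqrt_pos.2 ht
          have h2pi : Real.sqrt (2*Real.pi) ≠ 0 := sqrt_two_pi_pos.ne'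
          field_simp
        calc y^2/2 * (wgt α a * g2 K (t*a) y) = wgt α a * (y^2/2 * g2 K (t*a) y) := by ring
          _ ≤ wgt α a * (D0 * a ^ (-(1/2):ℝ)) := by
              rw [← h2]; exact mul_le_mul_of_nonneg_left h1 (wgt_nonneg ha)
          _ = D0 * (wgt α a * a ^ (-(1/2):ℝ)) := by ring
          _ = D0 * (a ^ (α - 3/2) * (1 - a) ^ (-α)) := by rw [wgt_mul_rpow ha]
      have hmono : (∫ a in Ioo (0:ℝ) 1, y^2/2 * (wgt α a * g2 K (t*a) y))
          ≤ ∫ a in Ioo (0:ℝ) 1, D0 * (a ^ (α - 3/2) * (1 - a) ^ (-α)) :=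
        setIntegral_mono_on ((D2 hK hα ht hy).1.const_mul _)
          ((wgt2_int hα).const_mul _) measurableSet_Ioo hpt
      have hlhs : y ^ 2 / 2 * (c * ∫ a in Ioo (0:ℝ) 1, wgt α a * g2 K (t*a) y)
          = c * ∫ a in Ioo (0:ℝ) 1, y^2/2 * (wgt α a * g2 K (t*a) y) := by
        rw [integral_const_mul]
        ring
      have hrhs : (∫ a in Ioo (0:ℝ) 1, D0 * (a ^ (α - 3/2) * (1 - a) ^ (-α)))
          = D0 * (Real.Gamma (α - 1/2) * Real.Gamma (1 - α) / Real.sqrt Real.pi) := by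
        rw [integral_const_mul, wgt2_value hα]
      have halg : c * (D0 * (Real.Gamma (α - 1/2) * Real.Gamma (1 - α) / Real.sqrt Real.pi))
          = Real.Gamma (α - 1/2) / (2 * Real.pi * Real.Gamma α) * Real.sqrt (K * y / (2*t)) := by
        rw [hc, hD0]
        have hsπ : 0 < Real.sqrt Real.pi := Real.sqrt_pos.2 Real.pi_pos
        have hs2 : 0 < Real.sqrt 2 := by positivity
        have hst : 0 < Real.sqrt t := Real.sqrt_pos.2 ht
        rw [Real.sqrt_div (by positivity : (0:ℝ) ≤ K*y) (2*t),
          Real.sqrt_mul (by norm_num : (0:ℝ) ≤ 2) t,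
          Real.sqrt_mul (by norm_num : (0:ℝ) ≤ 2) Real.pi]
        set sπ : ℝ := Real.sqrt Real.pi with hsπdef
        rw [show Real.pi = sπ * sπ from (Real.mul_self_sqrt Real.pi_pos.le).symm]
        have h1 : Real.Gamma α ≠ 0 := hGα.ne'
        have h2 : Real.Gamma (1 - α) ≠ 0 := hGα'.ne'
        field_simp
      calc y ^ 2 / 2 * (c * ∫ a in Ioo (0:ℝ) 1, wgt α a * g2 K (t*a) y)
          = c * ∫ a in Ioo (0:ℝ) 1, y^2/2 * (wgt α a * g2 K (t*a) y) := hlhs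
        _ ≤ c * ∫ a in Ioo (0:ℝ) 1, D0 * (a ^ (α - 3/2) * (1 - a) ^ (-α)) :=
            mul_le_mul_of_nonneg_left hmono hc_pos.le
        _ = c * (D0 * (Real.Gamma (α - 1/2) * Real.Gamma (1 - α) / Real.sqrt Real.pi)) := by
            rw [hrhs]
        _ = _ := halg
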